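/- Let p ∈ (1, ∞), let U ⊆ ℝⁿ be open, and let φ, ψ : U → ℝ be differentiable with φ > 0 and ψ ≥ 0 on U. Then pointwise on U: ‖∇ψ‖^p ≥ ‖∇φ‖^{p-2} · ⟨∇(ψ^p · φ^{1-p}), ∇φ⟩. -/

import Mathlib

set_option maxHeartbeats 1000000
open Real Set
open scoped RealInnerProductSpace

lemma aux_young (p s t A B I : ℝ) (hp : 1 < p) (hs : 0 ≤ s) (ht : 0 < t)
    (hA : 0 ≤ A) (hB : 0 < B) (hI : I ≤ A * B) :
    B ^ (p - 2) * (s ^ p * ((1 - p) * t ^ (1 - p - 1) * B ^ (2:ℝ))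
      + t ^ (1 - p) * (p * s ^ (p - 1) * I)) ≤ A ^ p := by
  have hp0 : 0 < p := lt_trans one_pos hp
  have hBp2 : 0 < B ^ (p - 2) := rpow_pos_of_pos hB _
  have step1 : B ^ (p - 2) * (s ^ p * ((1 - p) * t ^ (1 - p - 1) * B ^ (2:ℝ))
      + t ^ (1 - p) * (p * s ^ (p - 1) * I)) ≤
      B ^ (p - 2) * (s ^ p * ((1 - p) * t ^ (1 - p - 1) * B ^ (2:ℝ))
      + t ^ (1 - p) * (p * s ^ (p - 1) * (A * B))) := by
    apply mul_le_mul_of_nonneg_left _ hBp2.le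
    apply add_le_add_right
    refine mul_le_mul_of_nonneg_left ?_ (rpow_nonneg ht.le _)
    exact mul_le_mul_of_nonneg_left hI (mul_nonneg hp0.le (rpow_nonneg hs _))
  refine le_trans step1 ?_
  have e1 : B ^ (p - 2) * B ^ (2:ℝ) = B ^ p := by
    rw [← rpow_add hB]; norm_num
  have e2 : B ^ (p - 2) * B = B ^ (p - 1) := by
    rw [show p - 1 = p - 2 + 1 by ring, rpow_add hB, rpow_one]
  have e3 : t ^ (1 - p - 1) = (t ^ p)⁻¹ := by
    rw [show (1:ℝ) - p - 1 = -p by ring, rpow_neg ht.le]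
  have e4 : t ^ (1 - p) = (t ^ (p - 1))⁻¹ := by
    rw [show (1:ℝ) - p = -(p - 1) by ring, rpow_neg ht.le]
  have lhs_eq : B ^ (p - 2) * (s ^ p * ((1 - p) * t ^ (1 - p - 1) * B ^ (2:ℝ))
      + t ^ (1 - p) * (p * s ^ (p - 1) * (A * B))) =
      (1 - p) * s ^ p * (t ^ p)⁻¹ * B ^ p
        + p * s ^ (p - 1) * (t ^ (p - 1))⁻¹ * A * B ^ (p - 1) := by
    rw [e3, e4, ← e1, ← e2]; ring
  rw [lhs_eq]
  -- Young's inequality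
  have hpq : p.HolderConjugate (p / (p - 1)) := Real.HolderConjugate.conjExponent hp
  have hsBt : 0 ≤ s * B / t := by positivity
  have hy := Real.young_inequality_of_nonneg hA (rpow_nonneg hsBt (p - 1)) hpq
  have e5 : ((s * B / t) ^ (p - 1)) ^ (p / (p - 1)) = (s * B / t) ^ p := by
    rw [← rpow_mul hsBt, hpq.sub_one_mul_conj]
  have e6 : (s * B / t) ^ (p - 1) = s ^ (p - 1) * B ^ (p - 1) / t ^ (p - 1) := by
    rw [div_rpow (mul_nonneg hs hB.le) ht.le, mul_rpow hs hB.le]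
  have e7 : (s * B / t) ^ p = s ^ p * B ^ p / t ^ p := by
    rw [div_rpow (mul_nonneg hs hB.le) ht.le, mul_rpow hs hB.le]
  rw [e5, e6, e7] at hy
  have hy2 := mul_le_mul_of_nonneg_left hy hp0.le
  have hy3 : p * (A ^ p / p + s ^ p * B ^ p / t ^ p / (p / (p - 1))) =
      A ^ p + (p - 1) * (s ^ p * B ^ p * (t ^ p)⁻¹) := by
    field_simp
  rw [hy3] at hy2
  have hy4 : p * (A * (s ^ (p - 1) * B ^ (p - 1) / t ^ (p - 1))) =
      p * s ^ (p - 1) * (t ^ (p - 1))⁻¹ * A * B ^ (p - 1) := by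
    field_simp
  rw [hy4] at hy2
  nlinarith [hy2]

theorem stmt13 (n : ℕ) (p : ℝ) (hp : 1 < p)
    (U : Set (EuclideanSpace ℝ (Fin n))) (hU : IsOpen U)
    (φ ψ : EuclideanSpace ℝ (Fin n) → ℝ)
    (hφ_diff : ∀ x ∈ U, DifferentiableAt ℝ φ x)
    (hψ_diff : ∀ x ∈ U, DifferentiableAt ℝ ψ x)
    (hφ_pos : ∀ x ∈ U, 0 < φ x) (hψ_nonneg : ∀ x ∈ U, 0 ≤ ψ x) :
    ∀ x ∈ U,
      ‖gradient ψ x‖ ^ p ≥ ‖gradient φ x‖ ^ (p - 2) *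
        ⟪gradient (fun y => ψ y ^ p * φ y ^ (1 - p)) x, gradient φ x⟫ := by
  intro x hx

  set gψ := gradient ψ x with hgψ
  set gφ := gradient φ x with hgφ
  have hφx := hφ_pos x hx
  have hψx := hψ_nonneg x hx
  have hDψ : HasFDerivAt ψ (InnerProductSpace.toDual ℝ (EuclideanSpace ℝ (Fin n)) gψ) x :=
    ((hψ_diff x hx).hasGradientAt).hasFDerivAt
  have hDφ : HasFDerivAt φ (InnerProductSpace.toDual ℝ (EuclideanSpace ℝ (Fin n)) gφ) x :=
    ((hφ_diff x hx).hasGradientAt).hasFDerivAt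
  have hψp : HasFDerivAt (fun y => ψ y ^ p)
      ((p * ψ x ^ (p - 1)) • (InnerProductSpace.toDual ℝ (EuclideanSpace ℝ (Fin n)) gψ)) x :=
    (Real.hasDerivAt_rpow_const (p := p) (x := ψ x)
      (Or.inr hp.le)).comp_hasFDerivAt x hDψ
  have hφ1p : HasFDerivAt (fun y => φ y ^ (1 - p))
      (((1 - p) * φ x ^ (1 - p - 1)) • (InnerProductSpace.toDual ℝ (EuclideanSpace ℝ (Fin n)) gφ)) x :=
    (Real.hasDerivAt_rpow_const (p := 1 - p) (x := φ x)
      (Or.inl hφx.ne')).comp_hasFDerivAt x hDφ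
  have hmul := hψp.mul hφ1p
  have hgrad : HasGradientAt (fun y => ψ y ^ p * φ y ^ (1 - p))
      ((ψ x ^ p * ((1 - p) * φ x ^ (1 - p - 1))) • gφ
        + (φ x ^ (1 - p) * (p * ψ x ^ (p - 1))) • gψ) x := by
    apply hasGradientAt_iff_hasFDerivAt.mpr
    rw [map_add, map_smul, map_smul]
    rw [smul_smul, smul_smul] at hmul
    exact hmul
  rw [hgrad.gradient]
  rw [inner_add_left, real_inner_smul_left, real_inner_smul_left]
  rcases eq_or_ne gφ 0 with h0 | h0
  · simp only [h0, inner_zero_left, inner_zero_right, mul_zero, zero_add, add_zero, norm_zero]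
    have : (0:ℝ) ≤ ‖gψ‖ ^ p := rpow_nonneg (norm_nonneg _) _
    simpa using this
  · have hB : 0 < ‖gφ‖ := norm_pos_iff.mpr h0
    have hgg : ⟪gφ, gφ⟫ = ‖gφ‖ ^ (2:ℝ) := by
      rw [real_inner_self_eq_norm_sq, ← rpow_natCast ‖gφ‖ 2]
      norm_num
    have hI : ⟪gψ, gφ⟫ ≤ ‖gψ‖ * ‖gφ‖ := real_inner_le_norm gψ gφ
    have := aux_young p (ψ x) (φ x) ‖gψ‖ ‖gφ‖ ⟪gψ, gφ⟫ hp hψx hφx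
      (norm_nonneg _) hB hI
    rw [hgg]
    calc ‖gφ‖ ^ (p - 2) * (ψ x ^ p * ((1 - p) * φ x ^ (1 - p - 1)) * ‖gφ‖ ^ (2:ℝ)
          + φ x ^ (1 - p) * (p * ψ x ^ (p - 1)) * ⟪gψ, gφ⟫)
        = ‖gφ‖ ^ (p - 2) * (ψ x ^ p * ((1 - p) * φ x ^ (1 - p - 1) * ‖gφ‖ ^ (2:ℝ))
          + φ x ^ (1 - p) * (p * ψ x ^ (p - 1) * ⟪gψ, gφ⟫)) := by ring
      _ ≤ ‖gψ‖ ^ p := this
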